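/- Let D be a finitely supported probability distribution over subadditive valuations on m items (v(T ∪ T') ≤ v(T) + v(T') for all T, T'), let S ⊆ Fin m be nonempty, let p be an item pricing with p_j > 0 for every j ∈ S, let Γ = (max_{j∈S} p_j)/(min_{j∈S} p_j), and fix a selection rule A. Then there exists a real number γ ∈ [1/2, m·Γ] such that the item pricing q = γ·p satisfies: (a) q_j ≥ p_j / 2 for every j; and (b) E_{v∼D}[ Rev(v|S, q) ] ≥ (1 / (2 · ln(2mΓ))) · E_{v∼D}[ p( A(v, p, Fin m) ∩ S ) ], where ln denotes the natural logarithm. -/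

import Mathlib

open Finset

/-- The total price of a bundle of items under an item pricing `p`. -/
def priceOf {m : ℕ} (p : Fin m → ℝ) (T : Finset (Fin m)) : ℝ := ∑ j ∈ T, p j

/-- A valuation assigns `0` to the empty set and is nonnegative. -/
def IsValuation {m : ℕ} (v : Finset (Fin m) → ℝ) : Prop :=
  v ∅ = 0 ∧ ∀ T, 0 ≤ v T

/-- `T` is a demanded bundle for valuation `v` at pricing `q` with available set `S`:
it maximizes utility `v(T) - q(T)` among subsets of `S`. -/
def IsDemanded {m : ℕ} (v : Finset (Fin m) → ℝ) (q : Fin m → ℝ)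
    (S T : Finset (Fin m)) : Prop :=
  T ⊆ S ∧ ∀ T' ⊆ S, v T' - priceOf q T' ≤ v T - priceOf q T

/-- The revenue `Rev(v|S, q)`: the maximum price of a demanded bundle (the buyer breaks
ties in favor of a most expensive demanded bundle). -/
noncomputable def BRev {m : ℕ} (v : Finset (Fin m) → ℝ) (q : Fin m → ℝ)
    (S : Finset (Fin m)) : ℝ :=
  sSup {r : ℝ | ∃ T, IsDemanded v q S T ∧ r = priceOf q T}

/-- A selection rule assigns to every triple `(v, q, S)` a demanded bundle whose price
realizes `Rev(v|S, q)`. -/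
def IsSelRule {m : ℕ}
    (A : (Finset (Fin m) → ℝ) → (Fin m → ℝ) → Finset (Fin m) → Finset (Fin m)) : Prop :=
  ∀ v q S, IsDemanded v q S (A v q S) ∧ priceOf q (A v q S) = BRev v q S

namespace RRS

variable {m : ℕ}

lemma priceOf_nonneg (p : Fin m → ℝ) (hp : ∀ j, 0 ≤ p j) (T : Finset (Fin m)) :
    0 ≤ priceOf p T := Finset.sum_nonneg fun j _ => hp j

lemma priceOf_smul (γ : ℝ) (p : Fin m → ℝ) (T : Finset (Fin m)) :
    priceOf (fun j => γ * p j) T = γ * priceOf p T := by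
  simp [priceOf, Finset.mul_sum]

lemma priceOf_empty (p : Fin m → ℝ) : priceOf (m := m) p ∅ = 0 := by simp [priceOf]

lemma demanded_price_le_BRev (v : Finset (Fin m) → ℝ) (q : Fin m → ℝ)
    (S T : Finset (Fin m)) (hT : IsDemanded v q S T) :
    priceOf q T ≤ BRev v q S := by
  apply le_csSup
  · have hsub : {r : ℝ | ∃ T, IsDemanded v q S T ∧ r = priceOf q T} ⊆
        (fun T => priceOf q T) '' (S.powerset : Finset (Finset (Fin m))) := by
      rintro r ⟨T', hT', rfl⟩
      exact ⟨T', by simpa [Finset.mem_coe, Finset.mem_powerset] using hT'.1, rfl⟩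
    exact (((S.powerset : Finset (Finset (Fin m))) : Set (Finset (Fin m))).toFinite.image
      _).bddAbove.mono hsub
  · exact ⟨T, hT, rfl⟩

/-- the scaling factor -/
noncomputable def rN (b : ℝ) (N : ℕ) : ℝ := (2*b) ^ ((N : ℝ)⁻¹)

/-- the grid points -/
noncomputable def gridPt (b : ℝ) (N k : ℕ) : ℝ := (1/2) * (rN b N)^k

section grid
variable {b : ℝ} {N : ℕ} (hb : 1 ≤ b) (hN : 1 ≤ N)
include hb

lemma rN_ge_one : 1 ≤ rN b N :=
  Real.one_le_rpow (by linarith) (by positivity)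

include hN in
lemma rN_gt_one : 1 < rN b N := by
  rw [rN, Real.one_lt_rpow_iff_of_pos (by linarith)]
  left
  refine ⟨by linarith, ?_⟩
  have : (0:ℝ) < N := by exact_mod_cast Nat.pos_of_ne_zero (by omega)
  positivity

include hN in
lemma rN_pow_N : (rN b N)^N = 2*b := by
  rw [rN, ← Real.rpow_natCast ((2*b) ^ ((N : ℝ)⁻¹)) N, ← Real.rpow_mul (by linarith)]
  rw [inv_mul_cancel₀ (by exact_mod_cast (Nat.pos_of_ne_zero (by omega)).ne'), Real.rpow_one]

omit hb in
lemma gridPt_succ (k : ℕ) : gridPt b N (k+1) = rN b N * gridPt b N k := by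
  simp [gridPt, pow_succ]; ring

omit hb in
lemma gridPt_zero : gridPt b N 0 = 1/2 := by simp [gridPt]

lemma gridPt_pos (k : ℕ) : 0 < gridPt b N k := by
  have := rN_ge_one (b := b) (N := N) hb
  have : (0:ℝ) < (rN b N)^k := pow_pos (by linarith) k
  simp only [gridPt]; linarith

lemma gridPt_mono {k l : ℕ} (hkl : k ≤ l) : gridPt b N k ≤ gridPt b N l := by
  have h1 := rN_ge_one (b := b) (N := N) hb
  have := pow_le_pow_right₀ h1 hkl
  simp only [gridPt]; linarith

lemma gridPt_ge (k : ℕ) : 1/2 ≤ gridPt b N k := by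
  calc (1:ℝ)/2 = gridPt b N 0 := (gridPt_zero).symm
  _ ≤ gridPt b N k := gridPt_mono hb (Nat.zero_le k)


include hN in
lemma gridPt_N : gridPt b N N = b := by
  rw [gridPt, rN_pow_N hb hN]; ring

include hN in
lemma gridPt_le {k : ℕ} (hk : k ≤ N) : gridPt b N k ≤ b := by
  simpa [gridPt_N hb hN] using gridPt_mono (b := b) (N := N) hb hk

include hN in
lemma sum_grid : ∑ k ∈ Finset.range N, (rN b N - 1) * gridPt b N k = b - 1/2 := by
  have : ∑ k ∈ Finset.range N, (rN b N - 1) * gridPt b N k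
      = (1/2) * ((∑ k ∈ Finset.range N, (rN b N)^k) * (rN b N - 1)) := by
    rw [Finset.sum_mul, Finset.mul_sum]
    refine Finset.sum_congr rfl fun k _ => ?_
    simp only [gridPt]; ring
  rw [this, geom_sum_mul, rN_pow_N hb hN]; ring

end grid

lemma key_lemma (m : ℕ) (hm : 1 ≤ m) (v : Finset (Fin m) → ℝ) (hv0 : v ∅ = 0)
    (hsub : ∀ T T' : Finset (Fin m), v (T ∪ T') ≤ v T + v T')
    (S : Finset (Fin m)) (hS : S.Nonempty)
    (p : Fin m → ℝ) (hp : ∀ j, 0 ≤ p j) (hpS : ∀ j ∈ S, 0 < p j)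
    (A : (Finset (Fin m) → ℝ) → (Fin m → ℝ) → Finset (Fin m) → Finset (Fin m))
    (hA : IsSelRule A) (N : ℕ) (hN : 1 ≤ N) :
    priceOf p (A v p Finset.univ ∩ S) / 2 ≤
      ∑ k ∈ Finset.range N, (rN ((m:ℝ) * (S.sup' hS p / S.inf' hS p)) N - 1) *
        BRev v (fun j => gridPt ((m:ℝ) * (S.sup' hS p / S.inf' hS p)) N k * p j) S := by
  set pmax := S.sup' hS p with hpmaxdef
  set pmin := S.inf' hS p with hpmindef
  obtain ⟨j0, hj0S, hj0⟩ := S.exists_mem_eq_inf' hS p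
  have hpmin : 0 < pmin := by rw [hpmindef, hj0]; exact hpS j0 hj0S
  have hpminmax : pmin ≤ pmax := by rw [hpmindef, hpmaxdef, hj0]; exact Finset.le_sup' p hj0S
  have hpmax : 0 < pmax := lt_of_lt_of_le hpmin hpminmax
  set b := (m:ℝ) * (pmax / pmin) with hbdef
  have hm' : (1:ℝ) ≤ m := by exact_mod_cast hm
  have hb : 1 ≤ b := by
    have h1 : 1 ≤ pmax/pmin := (one_le_div hpmin).2 hpminmax
    nlinarith
  set r := rN b N with hrdef
  have hr1 : 1 ≤ r := rN_ge_one hb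
  set X := A v p Finset.univ ∩ S with hXdef
  set t := priceOf p X with htdef
  have htnn : 0 ≤ t := priceOf_nonneg p hp X
  -- v X ≥ p X
  have hvX : t ≤ v X := by
    obtain ⟨hdem, -⟩ := hA v p Finset.univ
    have h1 := hdem.2 (A v p Finset.univ \ S) (Finset.subset_univ _)
    have hsplit : v (A v p Finset.univ) ≤ v X + v (A v p Finset.univ \ S) := by
      have e : A v p Finset.univ ∩ S ∪ A v p Finset.univ \ S = A v p Finset.univ := by
        ext x; simp [Finset.mem_union, Finset.mem_inter, Finset.mem_sdiff]; tauto
      have := hsub (A v p Finset.univ ∩ S) (A v p Finset.univ \ S)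
      rwa [e] at this
    have hpr : priceOf p X + priceOf p (A v p Finset.univ \ S)
        = priceOf p (A v p Finset.univ) := Finset.sum_inter_add_sum_sdiff _ _ _
    linarith
  set T : ℕ → Finset (Fin m) := fun k => A v (fun j => gridPt b N k * p j) S with hTdef
  have hdemk : ∀ k, IsDemanded v (fun j => gridPt b N k * p j) S (T k) := fun k => (hA v _ S).1
  have hbrev : ∀ k, BRev v (fun j => gridPt b N k * p j) S = gridPt b N k * priceOf p (T k) := by
    intro k; rw [← (hA v _ S).2, priceOf_smul]
  set u : ℕ → ℝ := fun k => v (T k) - gridPt b N k * priceOf p (T k) with hudef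
  have humax : ∀ k, ∀ T' ⊆ S, v T' - gridPt b N k * priceOf p T' ≤ u k := by
    intro k T' hT'
    have := (hdemk k).2 T' hT'
    rwa [priceOf_smul, priceOf_smul] at this
  have hTksub : ∀ k, T k ⊆ S := fun k => (hdemk k).1
  have hTknn : ∀ k, 0 ≤ priceOf p (T k) := fun k => priceOf_nonneg p hp _
  have hunn : ∀ k, 0 ≤ u k := fun k => by
    have := humax k ∅ (Finset.empty_subset S)
    simpa [hv0, priceOf_empty] using this
  have hbrevnn : ∀ k, 0 ≤ BRev v (fun j => gridPt b N k * p j) S := fun k => by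
    rw [hbrev k]
    exact mul_nonneg (le_of_lt (gridPt_pos hb k)) (hTknn k)
  have htel : ∀ k, u k - u (k+1) ≤ (r - 1) * BRev v (fun j => gridPt b N k * p j) S := by
    intro k
    have h1 := humax (k+1) (T k) (hTksub k)
    have e : gridPt b N (k+1) * priceOf p (T k) = r * (gridPt b N k * priceOf p (T k)) := by
      rw [gridPt_succ]; ring
    have e2 : (r-1) * (gridPt b N k * priceOf p (T k))
        = r * (gridPt b N k * priceOf p (T k)) - gridPt b N k * priceOf p (T k) := by ring
    rw [hbrev k]
    simp only [hudef] at h1 ⊢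
    linarith
  have hsum : u 0 - u N ≤
      ∑ k ∈ Finset.range N, (r - 1) * BRev v (fun j => gridPt b N k * p j) S := by
    rw [← Finset.sum_range_sub' u N]
    exact Finset.sum_le_sum fun k _ => htel k
  have hu0 : t/2 ≤ u 0 := by
    have h := humax 0 X Finset.inter_subset_right
    rw [gridPt_zero] at h
    linarith
  have hu_eq : ∀ k, u k = v (T k) - gridPt b N k * priceOf p (T k) := fun _ => rfl
  have hu_empty : ∀ k, T k = ∅ → u k = 0 := by
    intro k hk; rw [hu_eq k, hk, hv0, priceOf_empty]; ring
  clear_value u T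
  by_cases hcase : u N ≤ 0
  · calc t/2 ≤ u 0 - u N := by linarith
      _ ≤ _ := hsum
  · push_neg at hcase
    have hlow : ∀ k < N, gridPt b N k * pmin ≤ BRev v (fun j => gridPt b N k * p j) S := by
      intro k hk
      have hγk : gridPt b N k ≤ gridPt b N N := gridPt_mono hb (le_of_lt hk)
      have hmulle : gridPt b N k * priceOf p (T N) ≤ gridPt b N N * priceOf p (T N) :=
        mul_le_mul_of_nonneg_right hγk (hTknn N)
      have huk : 0 < u k := by
        have h1 := humax k (T N) (hTksub N)
        have h2 : u N = v (T N) - gridPt b N N * priceOf p (T N) := hu_eq N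
        linarith
      have hTne : (T k).Nonempty := by
        rcases Finset.eq_empty_or_nonempty (T k) with h | h
        · exfalso
          have : u k = 0 := hu_empty k h
          linarith
        · exact h
      obtain ⟨j, hj⟩ := hTne
      have h1 : pmin ≤ priceOf p (T k) := by
        have h2 : pmin ≤ p j := Finset.inf'_le p (hTksub k hj)
        have h3 : p j ≤ priceOf p (T k) := Finset.single_le_sum (fun i _ => hp i) hj
        linarith
      rw [hbrev k]
      have hγpos := gridPt_pos (b := b) (N := N) hb k
      nlinarith
    have hsum2 : pmin * (b - 1/2) ≤
        ∑ k ∈ Finset.range N, (r - 1) * BRev v (fun j => gridPt b N k * p j) S := by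
      have h0 : pmin * (b - 1/2) = ∑ k ∈ Finset.range N, (r - 1) * (gridPt b N k * pmin) := by
        rw [← sum_grid hb hN, ← hrdef, Finset.mul_sum]
        refine Finset.sum_congr rfl fun k _ => by ring
      rw [h0]
      exact Finset.sum_le_sum fun k hk =>
        mul_le_mul_of_nonneg_left (hlow k (Finset.mem_range.mp hk)) (by linarith)
    have htm : t ≤ m * pmax := by
      have h1 : ∀ j ∈ X, p j ≤ pmax := fun j hj => Finset.le_sup' p (Finset.inter_subset_right hj)
      have hcard : (X.card : ℝ) ≤ m := by
        have := Finset.card_le_card (Finset.subset_univ X)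
        simp only [Finset.card_univ, Fintype.card_fin] at this
        exact_mod_cast this
      calc t ≤ ∑ _j ∈ X, pmax := Finset.sum_le_sum h1
        _ = X.card * pmax := by rw [Finset.sum_const, nsmul_eq_mul]
        _ ≤ m * pmax := by nlinarith
    have hpb : pmin * b = m * pmax := by
      rw [hbdef]; field_simp
    rcases Finset.eq_empty_or_nonempty X with hXe | hXne
    · have ht0 : t = 0 := by simp [htdef, hXe, priceOf_empty]
      rw [ht0]
      have : (0:ℝ) ≤ ∑ k ∈ Finset.range N,
          (r - 1) * BRev v (fun j => gridPt b N k * p j) S :=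
        Finset.sum_nonneg fun k _ => mul_nonneg (by linarith) (hbrevnn k)
      linarith
    · obtain ⟨j, hj⟩ := hXne
      have hpmt : pmin ≤ t := by
        have h2 : pmin ≤ p j := Finset.inf'_le p (Finset.inter_subset_right hj)
        have h3 : p j ≤ t := Finset.single_le_sum (fun i _ => hp i) hj
        linarith
      linarith

lemma brev_usc (v : Finset (Fin m) → ℝ) (p : Fin m → ℝ) (hp : ∀ j, 0 ≤ p j)
    (S : Finset (Fin m))
    (A : (Finset (Fin m) → ℝ) → (Fin m → ℝ) → Finset (Fin m) → Finset (Fin m))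
    (hA : IsSelRule A) {γ₀ : ℝ} (hγ₀ : 0 < γ₀) :
    UpperSemicontinuousAt (fun γ => BRev v (fun j => γ * p j) S) γ₀ := by
  intro y hy
  simp only at hy
  have hfq : ∀ γ : ℝ, BRev v (fun j => γ * p j) S
      = γ * priceOf p (A v (fun j => γ * p j) S) := by
    intro γ; rw [← (hA v _ S).2, priceOf_smul]
  have hclosed : ∀ T : Finset (Fin m),
      IsClosed {γ : ℝ | IsDemanded v (fun j => γ * p j) S T} := by
    intro T
    by_cases hTS : T ⊆ S
    · have e : {γ : ℝ | IsDemanded v (fun j => γ * p j) S T} =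
          ⋂ T' ∈ {T' : Finset (Fin m) | T' ⊆ S},
            {γ : ℝ | v T' - γ * priceOf p T' ≤ v T - γ * priceOf p T} := by
        ext γ
        simp only [Set.mem_iInter, Set.mem_setOf_eq, IsDemanded, priceOf_smul]
        exact ⟨fun h T' hT' => h.2 T' hT', fun h => ⟨hTS, h⟩⟩
      rw [e]
      exact isClosed_biInter fun T' _ =>
        isClosed_le (continuous_const.sub (continuous_id.mul continuous_const))
          (continuous_const.sub (continuous_id.mul continuous_const))
    · have e : {γ : ℝ | IsDemanded v (fun j => γ * p j) S T} = ∅ := by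
        ext γ
        simp only [Set.mem_setOf_eq, Set.mem_empty_iff_false, iff_false]
        exact fun h => hTS h.1
      rw [e]; exact isClosed_empty
  have h1 : ∀ᶠ γ in nhds γ₀, ∀ T : Finset (Fin m),
      IsDemanded v (fun j => γ * p j) S T → IsDemanded v (fun j => γ₀ * p j) S T := by
    rw [Filter.eventually_all]
    intro T
    by_cases hT : IsDemanded v (fun j => γ₀ * p j) S T
    · exact Filter.Eventually.of_forall fun γ _ => hT
    · have hmem : {γ : ℝ | IsDemanded v (fun j => γ * p j) S T}ᶜ ∈ nhds γ₀ :=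
        (hclosed T).isOpen_compl.mem_nhds hT
      filter_upwards [hmem] with γ hγc hdem
      exact absurd hdem hγc
  have h2 : ∀ᶠ γ in nhds γ₀, γ * (BRev v (fun j => γ₀ * p j) S / γ₀) < y := by
    have hc : Filter.Tendsto (fun γ : ℝ => γ * (BRev v (fun j => γ₀ * p j) S / γ₀))
        (nhds γ₀) (nhds (γ₀ * (BRev v (fun j => γ₀ * p j) S / γ₀))) :=
      (continuous_id.mul continuous_const).continuousAt
    have hval : γ₀ * (BRev v (fun j => γ₀ * p j) S / γ₀) = BRev v (fun j => γ₀ * p j) S := by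
      field_simp
    rw [hval] at hc
    exact hc.eventually_lt_const hy
  have h3 : ∀ᶠ γ in nhds γ₀, 0 < γ := by
    filter_upwards [(isOpen_Ioi (a := (0:ℝ))).mem_nhds hγ₀] with γ hγ
    exact hγ
  filter_upwards [h1, h2, h3] with γ hγ1 hγ2 hγ3
  have hdem := (hA v (fun j => γ * p j) S).1
  have hd0 : IsDemanded v (fun j => γ₀ * p j) S (A v (fun j => γ * p j) S) := hγ1 _ hdem
  have hple : γ₀ * priceOf p (A v (fun j => γ * p j) S) ≤ BRev v (fun j => γ₀ * p j) S := by
    have := demanded_price_le_BRev v _ S _ hd0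
    rwa [priceOf_smul] at this
  have hq : priceOf p (A v (fun j => γ * p j) S) ≤ BRev v (fun j => γ₀ * p j) S / γ₀ :=
    (le_div_iff₀ hγ₀).2 (by linarith)
  calc BRev v (fun j => γ * p j) S = γ * priceOf p (A v (fun j => γ * p j) S) := hfq γ
    _ ≤ γ * (BRev v (fun j => γ₀ * p j) S / γ₀) :=
        mul_le_mul_of_nonneg_left hq (le_of_lt hγ3)
    _ < y := hγ2

lemma tendsto_N_rpow (x : ℝ) (hx : 1 < x) :
    Filter.Tendsto (fun N : ℕ => (N : ℝ) * (x ^ ((N:ℝ)⁻¹) - 1)) Filter.atTop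
      (nhds (Real.log x)) := by
  have hx0 : 0 < x := by linarith
  have hc : Real.log x ≠ 0 := ne_of_gt (Real.log_pos hx)
  have hslope : Filter.Tendsto (fun h : ℝ => (Real.exp h - 1) / h) (nhdsWithin 0 {0}ᶜ)
      (nhds 1) := by
    have h := Real.hasDerivAt_exp 0
    rw [hasDerivAt_iff_tendsto_slope] at h
    have : (slope Real.exp 0) = fun h : ℝ => (Real.exp h - 1) / h := by
      funext z; rw [slope_def_field, Real.exp_zero, sub_zero]
    rw [this, Real.exp_zero] at h
    exact h
  have harg : Filter.Tendsto (fun N : ℕ => Real.log x / N) Filter.atTop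
      (nhdsWithin 0 {0}ᶜ) := by
    rw [tendsto_nhdsWithin_iff]
    refine ⟨tendsto_const_div_atTop_nhds_zero_nat _, ?_⟩
    filter_upwards [Filter.eventually_gt_atTop 0] with N hN
    have : (N:ℝ) ≠ 0 := Nat.cast_ne_zero.2 (Nat.pos_of_ne_zero (by omega)).ne'
    simp only [Set.mem_compl_iff, Set.mem_singleton_iff]
    exact div_ne_zero hc this
  have hcomp := hslope.comp harg
  have hmul := hcomp.const_mul (Real.log x)
  simp only [mul_one] at hmul
  refine Filter.Tendsto.congr' ?_ hmul
  filter_upwards [Filter.eventually_gt_atTop 0] with N hN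
  have hN' : (N:ℝ) ≠ 0 := Nat.cast_ne_zero.2 (Nat.pos_of_ne_zero (by omega)).ne'
  have hrw : x ^ ((N:ℝ)⁻¹) = Real.exp (Real.log x / N) := by
    rw [Real.rpow_def_of_pos hx0, mul_comm, div_eq_mul_inv, mul_comm]
  simp only [Function.comp]
  rw [hrw]
  field_simp

end RRS

/-- A finitely supported probability distribution, given by a finite list of atoms. -/
structure FinDist (α : Type*) where
  card : ℕ
  val : Fin card → α
  prob : Fin card → ℝ
  prob_nonneg : ∀ i, 0 ≤ prob i
  prob_sum : ∑ i : Fin card, prob i = 1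

set_option maxHeartbeats 1000000 in
open RRS in
/-- The revenue recovery scheme for subadditive valuations: a uniform
scaling `q = γ·p` with `γ ∈ [1/2, m·Γ]` recovers, over the available set `S`, a
`1/(2 ln(2mΓ))` fraction of the revenue contribution of `S` under `p`, where
`Γ = (max_{j∈S} p_j)/(min_{j∈S} p_j)`. -/
theorem subadditive_rrs
    (m : ℕ) (hm : 1 ≤ m)
    (D : FinDist (Finset (Fin m) → ℝ))
    (hD : ∀ a, 0 < D.prob a → IsValuation (D.val a) ∧
      ∀ T T' : Finset (Fin m), D.val a (T ∪ T') ≤ D.val a T + D.val a T')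
    (S : Finset (Fin m)) (hS : S.Nonempty)
    (p : Fin m → ℝ) (hp : ∀ j, 0 ≤ p j) (hpS : ∀ j ∈ S, 0 < p j)
    (A : (Finset (Fin m) → ℝ) → (Fin m → ℝ) → Finset (Fin m) → Finset (Fin m))
    (hA : IsSelRule A) :
    ∃ γ : ℝ, 1 / 2 ≤ γ ∧ γ ≤ (m : ℝ) * (S.sup' hS p / S.inf' hS p) ∧
      (∀ j, p j / 2 ≤ γ * p j) ∧
      ((1 / (2 * Real.log (2 * (m : ℝ) * (S.sup' hS p / S.inf' hS p)))) *
          ∑ a, D.prob a * priceOf p (A (D.val a) p Finset.univ ∩ S) ≤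
        ∑ a, D.prob a * BRev (D.val a) (fun j => γ * p j) S) := by
  classical
  obtain ⟨j0, hj0S, hj0⟩ := S.exists_mem_eq_inf' hS p
  have hpmin : 0 < S.inf' hS p := by rw [hj0]; exact hpS j0 hj0S
  have hpminmax : S.inf' hS p ≤ S.sup' hS p := by rw [hj0]; exact Finset.le_sup' p hj0S
  set b := (m:ℝ) * (S.sup' hS p / S.inf' hS p) with hbdef
  have hm' : (1:ℝ) ≤ m := by exact_mod_cast hm
  have hb : 1 ≤ b := by
    have h1 : 1 ≤ S.sup' hS p / S.inf' hS p := (one_le_div hpmin).2 hpminmax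
    rw [hbdef]; nlinarith
  set L := Real.log (2 * (m:ℝ) * (S.sup' hS p / S.inf' hS p)) with hLdef
  have hL2b : L = Real.log (2*b) := by rw [hLdef, hbdef]; ring_nf
  have hLpos : 0 < L := by rw [hL2b]; exact Real.log_pos (by linarith)
  set E := ∑ a, D.prob a * priceOf p (A (D.val a) p Finset.univ ∩ S) with hEdef
  set g : ℝ → ℝ := fun γ => ∑ a, D.prob a * BRev (D.val a) (fun j => γ * p j) S with hgdef
  -- Step 1: for every grid resolution N, some grid point has good revenue.
  have hstep : ∀ N : ℕ, 1 ≤ N → ∃ γ ∈ Set.Icc ((1:ℝ)/2) b,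
      E / (2 * ((N:ℝ) * (rN b N - 1))) ≤ g γ := by
    intro N hN
    have hr1' : 1 < rN b N := rN_gt_one hb hN
    have hNpos : (0:ℝ) < N := by exact_mod_cast Nat.pos_of_ne_zero (by omega)
    have hsum : E / 2 ≤ (rN b N - 1) * ∑ k ∈ Finset.range N, g (gridPt b N k) := by
      have hper : ∀ a, D.prob a * (priceOf p (A (D.val a) p Finset.univ ∩ S) / 2)
          ≤ D.prob a * ∑ k ∈ Finset.range N, (rN b N - 1) *
              BRev (D.val a) (fun j => gridPt b N k * p j) S := by
        intro a
        rcases eq_or_lt_of_le (D.prob_nonneg a) with h | h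
        · rw [← h]; simp
        · refine mul_le_mul_of_nonneg_left ?_ (le_of_lt h)
          obtain ⟨⟨hv0, hvnn⟩, hsub⟩ := hD a h
          exact key_lemma m hm (D.val a) hv0 hsub S hS p hp hpS A hA N hN
      calc E / 2 = ∑ a, D.prob a * (priceOf p (A (D.val a) p Finset.univ ∩ S) / 2) := by
            rw [hEdef, Finset.sum_div]
            exact Finset.sum_congr rfl fun a _ => by ring
        _ ≤ ∑ a, D.prob a * ∑ k ∈ Finset.range N, (rN b N - 1) *
              BRev (D.val a) (fun j => gridPt b N k * p j) S :=
            Finset.sum_le_sum fun a _ => hper a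
        _ = (rN b N - 1) * ∑ k ∈ Finset.range N, g (gridPt b N k) := by
            simp_rw [Finset.mul_sum]
            rw [Finset.sum_comm]
            refine Finset.sum_congr rfl fun k _ => ?_
            simp only [hgdef]
            rw [Finset.mul_sum]
            exact Finset.sum_congr rfl fun a _ => by ring
    have hrpos : (0:ℝ) < rN b N - 1 := by linarith
    have havg : ∑ _k ∈ Finset.range N, E / (2 * ((N:ℝ) * (rN b N - 1)))
        ≤ ∑ k ∈ Finset.range N, g (gridPt b N k) := by
      rw [Finset.sum_const, Finset.card_range, nsmul_eq_mul]
      have he : (N:ℝ) * (E / (2 * ((N:ℝ) * (rN b N - 1)))) = E / (2 * (rN b N - 1)) := by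
        field_simp
      rw [he, div_le_iff₀ (by positivity)]
      nlinarith [hsum]
    obtain ⟨k, hk, hgk⟩ := Finset.exists_le_of_sum_le ⟨0, Finset.mem_range.2 (by omega)⟩ havg
    exact ⟨gridPt b N k, ⟨gridPt_ge hb k, gridPt_le hb hN (le_of_lt (Finset.mem_range.1 hk))⟩, hgk⟩
  choose! γseq hγmem hgseq using hstep
  set x : ℕ → ℝ := fun n => γseq (n+1) with hxdef
  have hxmem : ∀ n, x n ∈ Set.Icc ((1:ℝ)/2) b := fun n => hγmem (n+1) (by omega)
  obtain ⟨γstar, hγstarmem, φ, hφ, hφtend⟩ := (isCompact_Icc).tendsto_subseq hxmem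
  have htendN : Filter.Tendsto (fun N : ℕ => (N:ℝ) * (rN b N - 1)) Filter.atTop (nhds L) := by
    rw [hL2b]
    have := tendsto_N_rpow (2*b) (by linarith)
    simpa [rN] using this
  have hatend : Filter.Tendsto (fun N : ℕ => E / (2 * ((N:ℝ) * (rN b N - 1)))) Filter.atTop
      (nhds (E / (2*L))) :=
    Filter.Tendsto.div tendsto_const_nhds (Filter.Tendsto.const_mul 2 htendN)
      (by positivity)
  have hψ : Filter.Tendsto (fun i => φ i + 1) Filter.atTop Filter.atTop :=
    (Filter.tendsto_add_atTop_nat 1).comp hφ.tendsto_atTop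
  have haφ : Filter.Tendsto
      (fun i => E / (2 * (((φ i + 1 : ℕ):ℝ) * (rN b (φ i + 1) - 1)))) Filter.atTop
      (nhds (E / (2*L))) := hatend.comp hψ
  have hγstarpos : (0:ℝ) < γstar := lt_of_lt_of_le (by norm_num) hγstarmem.1
  refine ⟨γstar, hγstarmem.1, hγstarmem.2, ?_, ?_⟩
  · intro j
    have := mul_le_mul_of_nonneg_right hγstarmem.1 (hp j)
    linarith
  · show (1/(2*L)) * E ≤ g γstar
    by_contra hcon
    push_neg at hcon
    have hgE : g γstar < E / (2*L) := by
      have : (1/(2*L)) * E = E / (2*L) := by ring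
      linarith [hcon, this.symm ▸ hcon]
    set y := (g γstar + E/(2*L))/2 with hydef
    have hy1 : g γstar < y := by rw [hydef]; linarith
    have hy2 : y < E/(2*L) := by rw [hydef]; linarith
    have husc : UpperSemicontinuousAt g γstar := by
      have : UpperSemicontinuousAt
          (fun γ => ∑ a, D.prob a * BRev (D.val a) (fun j => γ * p j) S) γstar := by
        apply upperSemicontinuousAt_sum
        intro a _
        intro z hz
        simp only at hz
        rcases eq_or_lt_of_le (D.prob_nonneg a) with h | h
        · rw [← h] at hz ⊢
          simp only [zero_mul] at hz
          exact Filter.Eventually.of_forall fun γ => by simpa using hz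
        · have husc1 := brev_usc (D.val a) p hp S A hA hγstarpos
          have hlt : BRev (D.val a) (fun j => γstar * p j) S < z / D.prob a := by
            rw [lt_div_iff₀ h]; linarith [hz]
          filter_upwards [husc1 _ hlt] with γ hγ2
          calc D.prob a * BRev (D.val a) (fun j => γ * p j) S
              < D.prob a * (z / D.prob a) := by
                exact mul_lt_mul_of_pos_left hγ2 h
            _ = z := by field_simp
      exact this
    have hev := husc y hy1
    have hev2 : ∀ᶠ i in Filter.atTop, g (x (φ i)) < y := hφtend.eventually hev
    have hev3 : ∀ᶠ i in Filter.atTop,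
        y < E / (2 * (((φ i + 1 : ℕ):ℝ) * (rN b (φ i + 1) - 1))) :=
      haφ.eventually (eventually_gt_nhds hy2)
    have hev4 : ∀ i, E / (2 * (((φ i + 1 : ℕ):ℝ) * (rN b (φ i + 1) - 1))) ≤ g (x (φ i)) :=
      fun i => hgseq (φ i + 1) (by omega)
    obtain ⟨i, hi2, hi3⟩ := (hev2.and hev3).exists
    exact absurd (lt_of_lt_of_le hi3 (hev4 i)) (not_lt.2 (le_of_lt hi2))
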